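/- arXiv:cs/0609002 — 3 statements merged into one kernel-verified Lean document; each statement's English description precedes it below -/
import Mathlib

section
/- If s is an algebraic term and s·σ →β* v, then there exists a substitution σ' such that σ(x) →β* σ'(x) for all x and v →β* s·σ'. -/
namespace CondConf

/-- Untyped lambda-terms with constants from `F`, in de Bruijn notation. -/
inductive Tm (F : Type) : Type
  | const : F → Tm F
  | var   : ℕ → Tm F
  | app   : Tm F → Tm F → Tm F
  | lam   : Tm F → Tm F

namespace Tm

variable {F : Type}

/-- Lift (shift) free de Bruijn indices `≥ d` by one. -/
def lift (d : ℕ) : Tm F → Tm F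
  | const f => const f
  | var n   => if n < d then var n else var (n + 1)
  | app s t => app (lift d s) (lift d t)
  | lam s   => lam (lift (d + 1) s)

/-- Capture-avoiding substitution `t[k := u]` (de Bruijn). -/
def subst : Tm F → ℕ → Tm F → Tm F
  | const f, _, _ => const f
  | var n, k, u   => if n = k then u else if k < n then var (n - 1) else var n
  | app s t, k, u => app (subst s k u) (subst t k u)
  | lam s, k, u   => lam (subst s (k + 1) (lift 0 u))

end Tm

/-- Capture-avoiding application of a substitution `σ` to a term. -/
def applySubst {F : Type} (σ : ℕ → Tm F) : Tm F → Tm F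
  | .const f => .const f
  | .var n   => σ n
  | .app s t => .app (applySubst σ s) (applySubst σ t)
  | .lam s   => .lam (applySubst (fun n => match n with
      | 0 => Tm.var 0
      | m + 1 => Tm.lift 0 (σ m)) s)

/-- One-step beta-reduction. -/
inductive Beta {F : Type} : Tm F → Tm F → Prop
  | beta (s t : Tm F) : Beta (Tm.app (Tm.lam s) t) (Tm.subst s 0 t)
  | appL {s s'} (t) : Beta s s' → Beta (Tm.app s t) (Tm.app s' t)
  | appR (s) {t t'} : Beta t t' → Beta (Tm.app s t) (Tm.app s t')
  | lam {s s'} : Beta s s' → Beta (Tm.lam s) (Tm.lam s')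

/-- Tait–Martin-Löf parallel beta-reduction. -/
inductive PB {F : Type} : Tm F → Tm F → Prop
  | refl (t : Tm F) : PB t t
  | lam {s s'} : PB s s' → PB (Tm.lam s) (Tm.lam s')
  | app {s s' t t'} : PB s s' → PB t t' → PB (Tm.app s t) (Tm.app s' t')
  | beta {s s' t t'} : PB s s' → PB t t' →
      PB (Tm.app (Tm.lam s) t) (Tm.subst s' 0 t')


/-- Algebraic terms: no abstraction and no applied variable. -/
inductive Alg {F : Type} : Tm F → Prop
  | const (f : F) : Alg (Tm.const f)
  | var (n : ℕ) : Alg (Tm.var n)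
  | app {s t} : Alg s → Alg t → (∀ n : ℕ, s ≠ Tm.var n) → Alg (Tm.app s t)

namespace Tm
variable {F : Type}

theorem lift_lift (t : Tm F) : ∀ d e, d ≤ e →
    lift d (lift e t) = lift (e + 1) (lift d t) := by
  induction t with
  | const f => intros; rfl
  | var n =>
    intro d e h
    simp only [lift]
    split_ifs <;> simp only [lift] <;> split_ifs <;>
      first | rfl | omega | (exfalso; omega) | (congr 1; omega)
  | app s t ihs iht => intro d e h; simp only [lift, ihs _ _ h, iht _ _ h]
  | lam s ih => intro d e h; simp only [lift, ih (d+1) (e+1) (by omega)]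

theorem lift_subst_low (s : Tm F) : ∀ d k u, d ≤ k →
    lift d (subst s k u) = subst (lift d s) (k + 1) (lift d u) := by
  induction s with
  | const f => intros; rfl
  | var n =>
    intro d k u h
    simp only [lift, subst]
    split_ifs <;> simp only [lift, subst] <;> split_ifs <;>
      first | rfl | omega | (exfalso; omega) | (congr 1; omega)
  | app s t ihs iht => intro d k u h; simp only [lift, subst, ihs _ _ _ h, iht _ _ _ h]
  | lam s ih =>
    intro d k u h
    simp only [lift, subst, ih (d+1) (k+1) (lift 0 u) (by omega)]
    rw [lift_lift u 0 d (by omega)]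

theorem lift_subst_high (s : Tm F) : ∀ d k u, k ≤ d →
    lift d (subst s k u) = subst (lift (d + 1) s) k (lift d u) := by
  induction s with
  | const f => intros; rfl
  | var n =>
    intro d k u h
    simp only [lift, subst]
    split_ifs <;> simp only [lift, subst] <;> split_ifs <;>
      first | rfl | omega | (exfalso; omega) | (congr 1; omega)
  | app s t ihs iht => intro d k u h; simp only [lift, subst, ihs _ _ _ h, iht _ _ _ h]
  | lam s ih =>
    intro d k u h
    simp only [lift, subst, ih (d+1) (k+1) (lift 0 u) (by omega)]
    rw [lift_lift u 0 d (by omega)]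

theorem subst_lift (t : Tm F) : ∀ k u, subst (lift k t) k u = t := by
  induction t with
  | const f => intros; rfl
  | var n =>
    intro k u
    simp only [lift]
    split_ifs <;> simp only [subst] <;> split_ifs <;>
      first | rfl | omega | (exfalso; omega) | (congr 1; omega)
  | app s t ihs iht => intro k u; simp only [lift, subst, ihs, iht]
  | lam s ih => intro k u; simp only [lift, subst, ih]

theorem subst_subst (s : Tm F) : ∀ t u j k, j ≤ k →
    subst (subst s j t) k u = subst (subst s (k + 1) (lift j u)) j (subst t k u) := by
  induction s with
  | const f => intros; rfl
  | var n =>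
    intro t u j k h
    simp only [subst]
    split_ifs <;>
      first
        | (exfalso; omega)
        | rfl
        | (simp only [subst]; split_ifs <;>
            first
              | rfl | (exfalso; omega) | (congr 1; omega)
              | (rw [subst_lift]) | (exact (subst_lift u j (subst t k u)).symm))
  | app a b iha ihb => intro t u j k h; simp only [subst, iha _ _ _ _ h, ihb _ _ _ _ h]
  | lam a ih =>
    intro t u j k h
    simp only [subst, ih (lift 0 t) (lift 0 u) (j+1) (k+1) (by omega)]
    rw [lift_subst_low t 0 k u (by omega), lift_lift u 0 j (by omega)]

end Tm

namespace CR

open Tm Relation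

variable {F : Type}

abbrev BS (a b : Tm F) := ReflTransGen (Beta (F := F)) a b

theorem beta_lift {t t' : Tm F} (h : Beta t t') : ∀ d, Beta (lift d t) (lift d t') := by
  induction h with
  | beta s t =>
    intro d
    rw [lift_subst_high s d 0 t (by omega)]
    exact Beta.beta (lift (d+1) s) (lift d t)
  | appL t _ ih => intro d; exact Beta.appL _ (ih d)
  | appR s _ ih => intro d; exact Beta.appR _ (ih d)
  | lam _ ih => intro d; exact Beta.lam (ih (_ + 1))

theorem bs_lift {t t' : Tm F} (h : BS t t') (d : ℕ) : BS (lift d t) (lift d t') :=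
  ReflTransGen.lift (lift d) (fun _ _ hb => beta_lift hb d) _ _ h

theorem bs_appL {s s' : Tm F} (t : Tm F) (h : BS s s') : BS (app s t) (app s' t) :=
  ReflTransGen.lift (fun x => app x t) (fun _ _ hb => Beta.appL t hb) _ _ h

theorem bs_appR (s : Tm F) {t t' : Tm F} (h : BS t t') : BS (app s t) (app s t') :=
  ReflTransGen.lift (fun x => app s x) (fun _ _ hb => Beta.appR s hb) _ _ h

theorem bs_app {s s' t t' : Tm F} (hs : BS s s') (ht : BS t t') :
    BS (app s t) (app s' t') := (bs_appL t hs).trans (bs_appR s' ht)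

theorem bs_lam {s s' : Tm F} (h : BS s s') : BS (lam s) (lam s') :=
  ReflTransGen.lift Tm.lam (fun _ _ hb => Beta.lam hb) _ _ h

theorem pb_lift {t t' : Tm F} (h : PB t t') : ∀ d, PB (lift d t) (lift d t') := by
  induction h with
  | refl t => intro d; exact PB.refl _
  | lam _ ih => intro d; exact PB.lam (ih (d+1))
  | app _ _ ihs iht => intro d; exact PB.app (ihs d) (iht d)
  | beta _ _ ihs iht =>
    intro d
    rw [lift_subst_high _ d 0 _ (by omega)]
    exact PB.beta (ihs (d+1)) (iht d)

theorem subst_pb (s : Tm F) : ∀ {u u' : Tm F} (k : ℕ), PB u u' →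
    PB (subst s k u) (subst s k u') := by
  induction s with
  | const f => intros; exact PB.refl _
  | var n =>
    intro u u' k h
    simp only [subst]
    split_ifs <;> first | exact h | exact PB.refl _
  | app a b iha ihb => intro u u' k h; exact PB.app (iha k h) (ihb k h)
  | lam a ih => intro u u' k h; exact PB.lam (ih (k+1) (pb_lift h 0))

theorem pb_subst {s s' : Tm F} (hs : PB s s') :
    ∀ {u u' : Tm F} (k : ℕ), PB u u' → PB (subst s k u) (subst s' k u') := by
  induction hs with
  | refl t => intro u u' k hu; exact subst_pb t k hu
  | lam _ ih => intro u u' k hu; exact PB.lam (ih (k+1) (pb_lift hu 0))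
  | app _ _ iha ihb => intro u u' k hu; exact PB.app (iha k hu) (ihb k hu)
  | beta _ _ iha ihb =>
    intro u u' k hu
    simp only [subst]
    rw [subst_subst _ _ _ 0 k (by omega)]
    exact PB.beta (iha (k+1) (pb_lift hu 0)) (ihb k hu)

/-- Complete development. -/
def cd : Tm F → Tm F
  | .const f => .const f
  | .var n => .var n
  | .lam s => .lam (cd s)
  | .app (.lam s) t => subst (cd s) 0 (cd t)
  | .app (.const f) t => .app (.const f) (cd t)
  | .app (.var n) t => .app (.var n) (cd t)
  | .app (.app a b) t => .app (cd (.app a b)) (cd t)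

theorem cd_app_ne_lam {s : Tm F} (t : Tm F) (h : ∀ b, s ≠ lam b) :
    cd (app s t) = app (cd s) (cd t) := by
  cases s with
  | const f => rfl
  | var n => rfl
  | app a b => rfl
  | lam a => exact absurd rfl (h a)

theorem pb_cd : ∀ t : Tm F, PB t (cd t)
  | .const f => PB.refl _
  | .var n => PB.refl _
  | .lam s => PB.lam (pb_cd s)
  | .app (.lam s) t => PB.beta (pb_cd s) (pb_cd t)
  | .app (.const f) t => PB.app (PB.refl _) (pb_cd t)
  | .app (.var n) t => PB.app (PB.refl _) (pb_cd t)
  | .app (.app a b) t => PB.app (pb_cd (.app a b)) (pb_cd t)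

theorem pb_lam_inv {a w : Tm F} (h : PB (lam a) w) : ∃ a', w = lam a' ∧ PB a a' := by
  cases h with
  | refl => exact ⟨a, rfl, PB.refl a⟩
  | lam h => exact ⟨_, rfl, h⟩

theorem triangle {t u : Tm F} (h : PB t u) : PB u (cd t) := by
  induction h with
  | refl t => exact pb_cd t
  | lam _ ih => exact PB.lam ih
  | @app s s' t t' hs ht ihs iht =>
    cases s with
    | lam a =>
      obtain ⟨a', rfl, _⟩ := pb_lam_inv hs
      obtain ⟨a'', ha'', hpb⟩ := pb_lam_inv ihs
      cases ha''
      exact PB.beta hpb iht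
    | const f => exact PB.app ihs iht
    | var n => exact PB.app ihs iht
    | app a b => exact PB.app ihs iht
  | beta _ _ ihs iht => exact pb_subst ihs 0 iht

theorem pb_of_beta {t u : Tm F} (h : Beta t u) : PB t u := by
  induction h with
  | beta s t => exact PB.beta (PB.refl s) (PB.refl t)
  | appL t _ ih => exact PB.app ih (PB.refl t)
  | appR s _ ih => exact PB.app (PB.refl s) ih
  | lam _ ih => exact PB.lam ih

theorem bs_of_pb {t u : Tm F} (h : PB t u) : BS t u := by
  induction h with
  | refl t => exact ReflTransGen.refl
  | lam _ ih => exact bs_lam ih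
  | app _ _ ihs iht => exact bs_app ihs iht
  | beta _ _ ihs iht =>
    exact ((bs_app (bs_lam ihs) iht).trans (ReflTransGen.single (Beta.beta _ _)))

theorem bs_iff_pbs {t u : Tm F} : BS t u ↔ ReflTransGen (PB (F := F)) t u := by
  constructor
  · exact fun h => ReflTransGen.mono (fun _ _ => pb_of_beta) _ _ h
  · intro h
    induction h with
    | refl => exact ReflTransGen.refl
    | tail _ h2 ih => exact ih.trans (bs_of_pb h2)

theorem confluence {a b c : Tm F} (hab : BS a b) (hac : BS a c) :
    ∃ d, BS b d ∧ BS c d := by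
  have h := Relation.church_rosser
    (r := PB (F := F))
    (fun x y z hxy hxz =>
      ⟨cd x, ReflGen.single (triangle hxy), ReflTransGen.single (triangle hxz)⟩)
    (bs_iff_pbs.mp hab) (bs_iff_pbs.mp hac)
  obtain ⟨d, hbd, hcd⟩ := h
  exact ⟨d, bs_iff_pbs.mpr hbd, bs_iff_pbs.mpr hcd⟩

end CR

namespace CR

open Tm Relation

variable {F : Type}

/-- Pointwise reduction of the substitution lifts through `applySubst`. -/
theorem applySubst_star {σ τ : ℕ → Tm F} (h : ∀ x, BS (σ x) (τ x)) :
    ∀ s : Tm F, BS (applySubst σ s) (applySubst τ s) := by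
  intro s
  induction s generalizing σ τ with
  | const f => exact ReflTransGen.refl
  | var n => exact h n
  | app a b iha ihb => exact bs_app (iha h) (ihb h)
  | lam a ih =>
    refine bs_lam (ih ?_)
    intro x
    match x with
    | 0 => exact ReflTransGen.refl
    | m + 1 => exact bs_lift (h m) 0

theorem const_bs_inv {f : F} {v : Tm F} (h : BS (.const f) v) : v = .const f := by
  induction h with
  | refl => rfl
  | tail _ h2 ih => subst ih; cases h2

theorem lam_bs_inv {a v : Tm F} (h : BS (.lam a) v) : ∃ a', v = .lam a' ∧ BS a a' := by
  induction h with
  | refl => exact ⟨a, rfl, ReflTransGen.refl⟩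
  | tail _ h2 ih =>
    obtain ⟨a', rfl, ha'⟩ := ih
    cases h2 with
    | lam h => exact ⟨_, rfl, ha'.tail h⟩

/-- Reducts of an application whose head never becomes a lambda. -/
theorem rigid_app_bs_inv {A B v : Tm F}
    (H : ∀ a, BS A a → ∀ b, a ≠ .lam b) (h : BS (.app A B) v) :
    ∃ a b, v = .app a b ∧ BS A a ∧ BS B b := by
  induction h with
  | refl => exact ⟨A, B, rfl, ReflTransGen.refl, ReflTransGen.refl⟩
  | tail _ h2 ih =>
    obtain ⟨a, b, rfl, ha, hb⟩ := ih
    cases h2 with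
    | beta s t => exact absurd rfl (H _ ha s)
    | appL t h => exact ⟨_, b, rfl, ha.tail h, hb⟩
    | appR s h => exact ⟨a, _, rfl, ha, hb.tail h⟩

end CR

/-- if `s` is algebraic and `s·σ →β* v` then `v →β* s·σ'` for some
`σ'` with `σ →β* σ'` pointwise. -/
theorem betaStar_algebraic {F : Type} {s v : Tm F} {σ : ℕ → Tm F}
    (hs : Alg s) (h : Relation.ReflTransGen Beta (applySubst σ s) v) :
    ∃ σ' : ℕ → Tm F, (∀ x : ℕ, Relation.ReflTransGen Beta (σ x) (σ' x)) ∧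
      Relation.ReflTransGen Beta v (applySubst σ' s) := by
  induction hs generalizing σ v with
  | const f =>
    refine ⟨σ, fun _ => Relation.ReflTransGen.refl, ?_⟩
    have : v = .const f := CR.const_bs_inv h
    subst this
    exact Relation.ReflTransGen.refl
  | var n =>
    refine ⟨Function.update σ n v, ?_, ?_⟩
    · intro x
      by_cases hx : x = n
      · subst hx; simpa [applySubst] using h
      · simp only [Function.update, hx]; exact Relation.ReflTransGen.refl
    · simp only [applySubst, Function.update_self]; exact Relation.ReflTransGen.refl
  | @app a b ha hb hnv iha ihb =>
    have HA : ∀ w, CR.BS (applySubst σ a) w → ∀ c, w ≠ .lam c := by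
      intro w hw c hc
      obtain ⟨σ₁, _, h2⟩ := iha hw
      subst hc
      obtain ⟨c', hc', _⟩ := CR.lam_bs_inv h2
      cases ha with
      | const f => simp [applySubst] at hc'
      | var n => exact hnv n rfl
      | app => simp [applySubst] at hc'
    obtain ⟨x, y, rfl, hx, hy⟩ := CR.rigid_app_bs_inv HA h
    obtain ⟨σ₁, hσ₁, hx'⟩ := iha hx
    obtain ⟨σ₂, hσ₂, hy'⟩ := ihb hy
    choose σ' j1 j2 using fun n => CR.confluence (hσ₁ n) (hσ₂ n)
    refine ⟨σ', fun n => (hσ₁ n).trans (j1 n), ?_⟩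
    exact CR.bs_app (hx'.trans (CR.applySubst_star j1 a))
      (hy'.trans (CR.applySubst_star j2 b))

end CondConf
end

section
/- The relation ≻ is well-founded on the set of weakly beta-normalizing lambda-terms, where s ≻ t holds if either s has head-redex form and s head-beta-reduces to t, or s = λx⃗. v a_0 a_1 … a_n with v a variable or constant, n ≥ 1, and t = a_i for some i. -/
namespace CondConf

/-- One-step head beta-reduction: contracts the head redex
`λx⃗.(λy.b) a₀ a⃗ →h λx⃗.b[y:=a₀] a⃗`. -/
inductive Head {F : Type} : Tm F → Tm F → Prop
  | beta (s t : Tm F) : Head (Tm.app (Tm.lam s) t) (Tm.subst s 0 t)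
  | app {s s'} (t) : Head s s' → (∀ b : Tm F, s ≠ Tm.lam b) →
      Head (Tm.app s t) (Tm.app s' t)
  | lam {s s'} : Head s s' → Head (Tm.lam s) (Tm.lam s')

/-- Head of the application spine. -/
def spineHead {F : Type} : Tm F → Tm F
  | .app s _ => spineHead s
  | t => t

/-- Arguments of the application spine. -/
def spineArgs {F : Type} : Tm F → List (Tm F)
  | .app s t => spineArgs s ++ [t]
  | _ => []

/-- Strip the outer abstractions `λx⃗`. -/
def stripLam {F : Type} : Tm F → Tm F
  | .lam s => stripLam s
  | t => t

/-- `t'` is obtained from `t` by renaming its (de Bruijn) variables; this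
accounts for the fact that the free variables of an argument may be bound in
the surrounding term (e.g. `λx. f x ≻ y` for every variable `y`). -/
def Renaming {F : Type} (t t' : Tm F) : Prop :=
  ∃ ρ : ℕ → ℕ, t' = applySubst (fun n => Tm.var (ρ n)) t

/-- The relation `≻`: either a head beta-step, or passing (up to renaming of
variables) to one of the arguments `aᵢ` of `s = λx⃗. v a₀ … aₙ` where the head
`v` is a variable or a constant and there is at least one argument. -/
inductive Succ {F : Type} : Tm F → Tm F → Prop
  | head {s t : Tm F} : Head s t → Succ s t
  | arg {s a t : Tm F} :
      ((∃ n : ℕ, spineHead (stripLam s) = Tm.var n) ∨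
        (∃ f : F, spineHead (stripLam s) = Tm.const f)) →
      a ∈ spineArgs (stripLam s) →
      1 ≤ (spineArgs (stripLam s)).length →
      Renaming a t → Succ s t

/-- Beta-normal forms. -/
def BetaNF {F : Type} (t : Tm F) : Prop := ∀ u : Tm F, ¬ Beta t u

/-- Weakly beta-normalizing terms: terms having a beta-normal form. -/
def WN {F : Type} (s : Tm F) : Prop :=
  ∃ t : Tm F, Relation.ReflTransGen Beta s t ∧ BetaNF t

section DeBruijn

variable {F : Type}

open Tm

theorem lift_var (d n : ℕ) :
    lift d (var n : Tm F) = if n < d then var n else var (n + 1) := rfl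

theorem subst_var (n k : ℕ) (u : Tm F) :
    subst (var n : Tm F) k u = if n = k then u else if k < n then var (n - 1) else var n := rfl

theorem lift_lift (t : Tm F) : ∀ e d, e ≤ d →
    lift e (lift d t) = lift (d + 1) (lift e t) := by
  induction t with
  | const f => intros; rfl
  | var n =>
    intro e d h
    simp only [lift_var]
    split_ifs <;> simp only [lift_var] <;> split_ifs <;>
      first | rfl | (congr 1; omega) | (exfalso; omega)
  | app s t ihs iht => intro e d h; simp only [lift, ihs e d h, iht e d h]
  | lam s ih =>
    intro e d h
    simp only [lift, ih (e+1) (d+1) (by omega)]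

theorem subst_lift_cancel (t : Tm F) : ∀ j (u : Tm F), subst (lift j t) j u = t := by
  induction t with
  | const f => intros; rfl
  | var n =>
    intro j u
    simp only [lift_var]
    split_ifs <;> simp only [subst_var] <;> split_ifs <;>
      first | rfl | (congr 1; omega) | (exfalso; omega)
  | app s t ihs iht => intro j u; simp only [subst, lift, ihs, iht]
  | lam s ih => intro j u; simp only [subst, lift, ih]

theorem lift_subst_high (t : Tm F) : ∀ k d (b : Tm F), k ≤ d →
    lift d (subst t k b) = subst (lift (d+1) t) k (lift d b) := by
  induction t with
  | const f => intros; rfl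
  | var n =>
    intro k d b h
    simp only [subst_var, lift_var]
    split_ifs <;> simp only [subst_var, lift_var] <;> split_ifs <;>
      first | rfl | (congr 1; omega) | (exfalso; omega)
  | app s t ihs iht => intro k d b h; simp only [subst, lift, ihs k d b h, iht k d b h]
  | lam s ih =>
    intro k d b h
    simp only [subst, lift, ih (k+1) (d+1) (lift 0 b) (by omega)]
    rw [lift_lift b 0 d (by omega)]

theorem lift_subst_low (t : Tm F) : ∀ e k (b : Tm F), e ≤ k →
    lift e (subst t k b) = subst (lift e t) (k+1) (lift e b) := by
  induction t with
  | const f => intros; rfl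
  | var n =>
    intro e k b h
    simp only [subst_var, lift_var]
    split_ifs <;> simp only [subst_var, lift_var] <;> split_ifs <;>
      first | rfl | (congr 1; omega) | (exfalso; omega)
  | app s t ihs iht => intro e k b h; simp only [subst, lift, ihs e k b h, iht e k b h]
  | lam s ih =>
    intro e k b h
    simp only [subst, lift, ih (e+1) (k+1) (lift 0 b) (by omega)]
    rw [lift_lift b 0 e (by omega)]

theorem subst_subst (p : Tm F) : ∀ j k (q b : Tm F), j ≤ k →
    subst (subst p j q) k b = subst (subst p (k+1) (lift j b)) j (subst q k b) := by
  induction p with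
  | const f => intros; rfl
  | var n =>
    intro j k q b h
    simp only [subst_var]
    split_ifs <;> simp only [subst_var, subst_lift_cancel] <;> (try split_ifs) <;>
      first | rfl | (congr 1; omega) | (exfalso; omega)
  | app s t ihs iht => intro j k q b h; simp only [subst, ihs _ _ _ _ h, iht _ _ _ _ h]
  | lam s ih =>
    intro j k q b h
    simp only [subst]
    rw [ih (j+1) (k+1) (lift 0 q) (lift 0 b) (by omega)]
    rw [lift_lift b 0 j (by omega), lift_subst_low q 0 k b (by omega)]

end DeBruijn
section Reductions

variable {F : Type}

open Tm

/-- "not a lambda" -/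
def NL (s : Tm F) : Prop := ∀ b : Tm F, s ≠ Tm.lam b

theorem head_shape {s t : Tm F} (h : Head s t) :
    (∃ a b, s = Tm.app a b) ∨ (∃ c, s = Tm.lam c) := by
  cases h with
  | beta s t => exact Or.inl ⟨_, _, rfl⟩
  | app t h nl => exact Or.inl ⟨_, _, rfl⟩
  | lam h => exact Or.inr ⟨_, rfl⟩

theorem head_shape_app {s t : Tm F} (h : Head s t) (nl : NL s) :
    ∃ a b, s = Tm.app a b := by
  rcases head_shape h with h' | ⟨c, rfl⟩
  · exact h'
  · exact absurd rfl (nl c)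

theorem head_lift {s t : Tm F} (h : Head s t) : ∀ d, Head (lift d s) (lift d t) := by
  induction h with
  | beta s t =>
    intro d
    have : lift d (subst s 0 t) = subst (lift (d+1) s) 0 (lift d t) :=
      lift_subst_high s 0 d t (by omega)
    rw [this]
    exact Head.beta _ _
  | app t h nl ih =>
    intro d
    obtain ⟨a, b, rfl⟩ := head_shape_app h nl
    exact Head.app _ (ih d) (by intro c; simp [lift])
  | lam h ih => intro d; exact Head.lam (ih (d+1))

theorem head_subst {s t : Tm F} (h : Head s t) : ∀ k (u : Tm F),
    Head (subst s k u) (subst t k u) := by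
  induction h with
  | beta s t =>
    intro k u
    have : subst (subst s 0 t) k u = subst (subst s (k+1) (lift 0 u)) 0 (subst t k u) :=
      subst_subst s 0 k t u (by omega)
    rw [this]
    exact Head.beta _ _
  | app t h nl ih =>
    intro k u
    obtain ⟨a, b, rfl⟩ := head_shape_app h nl
    exact Head.app _ (ih k u) (by intro c; simp [subst])
  | lam h ih => intro k u; exact Head.lam (ih (k+1) (lift 0 u))

theorem pb_lift {s t : Tm F} (h : PB s t) : ∀ d, PB (lift d s) (lift d t) := by
  induction h with
  | refl t => intro d; exact PB.refl _
  | lam h ih => intro d; exact PB.lam (ih (d+1))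
  | app h1 h2 ih1 ih2 => intro d; exact PB.app (ih1 d) (ih2 d)
  | @beta s s' t t' h1 h2 ih1 ih2 =>
    intro d
    have : lift d (subst s' 0 t') = subst (lift (d+1) s') 0 (lift d t') :=
      lift_subst_high s' 0 d t' (by omega)
    rw [this]
    exact PB.beta (ih1 (d+1)) (ih2 d)

theorem pb_subst_arg (a : Tm F) : ∀ k {b b' : Tm F}, PB b b' →
    PB (subst a k b) (subst a k b') := by
  induction a with
  | const f => intros; exact PB.refl _
  | var n =>
    intro k b b' h
    simp only [subst_var]
    split_ifs <;> first | exact h | exact PB.refl _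
  | app s t ihs iht => intro k b b' h; exact PB.app (ihs k h) (iht k h)
  | lam s ih => intro k b b' h; exact PB.lam (ih (k+1) (pb_lift h 0))

theorem pb_subst {a a' : Tm F} (h : PB a a') : ∀ k {b b' : Tm F}, PB b b' →
    PB (subst a k b) (subst a' k b') := by
  induction h with
  | refl t => intro k b b' hb; exact pb_subst_arg t k hb
  | lam h ih => intro k b b' hb; exact PB.lam (ih (k+1) (pb_lift hb 0))
  | app h1 h2 ih1 ih2 => intro k b b' hb; exact PB.app (ih1 k hb) (ih2 k hb)
  | @beta s s' t t' h1 h2 ih1 ih2 =>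
    intro k b b' hb
    have e : subst (subst s' 0 t') k b' = subst (subst s' (k+1) (lift 0 b')) 0 (subst t' k b') :=
      subst_subst s' 0 k t' b' (by omega)
    rw [e]
    exact PB.beta (ih1 (k+1) (pb_lift hb 0)) (ih2 k hb)

theorem head_beta {s t : Tm F} (h : Head s t) : Beta s t := by
  induction h with
  | beta s t => exact Beta.beta s t
  | app t h nl ih => exact Beta.appL t ih
  | lam h ih => exact Beta.lam ih

theorem beta_pb {s t : Tm F} (h : Beta s t) : PB s t := by
  induction h with
  | beta s t => exact PB.beta (PB.refl s) (PB.refl t)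
  | appL t h ih => exact PB.app ih (PB.refl t)
  | appR s h ih => exact PB.app (PB.refl s) ih
  | lam h ih => exact PB.lam ih

/-- congruence lemmas for `Beta`-many-steps -/
theorem betastar_lam {s t : Tm F} (h : Relation.ReflTransGen Beta s t) :
    Relation.ReflTransGen Beta (Tm.lam s) (Tm.lam t) :=
  Relation.ReflTransGen.lift Tm.lam (fun _ _ h => Beta.lam h) _ _ h

theorem betastar_appL {s t : Tm F} (u : Tm F) (h : Relation.ReflTransGen Beta s t) :
    Relation.ReflTransGen Beta (Tm.app s u) (Tm.app t u) :=
  Relation.ReflTransGen.lift (fun x => Tm.app x u) (fun _ _ h => Beta.appL u h) _ _ h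

theorem betastar_appR (u : Tm F) {s t : Tm F} (h : Relation.ReflTransGen Beta s t) :
    Relation.ReflTransGen Beta (Tm.app u s) (Tm.app u t) :=
  Relation.ReflTransGen.lift (fun x => Tm.app u x) (fun _ _ h => Beta.appR u h) _ _ h

theorem pb_betastar {s t : Tm F} (h : PB s t) : Relation.ReflTransGen Beta s t := by
  induction h with
  | refl t => exact .refl
  | lam h ih => exact betastar_lam ih
  | app h1 h2 ih1 ih2 => exact .trans (betastar_appL _ ih1) (betastar_appR _ ih2)
  | @beta s s' t t' h1 h2 ih1 ih2 =>
    exact .tail (.trans (betastar_appL _ (betastar_lam ih1)) (betastar_appR _ ih2))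
      (Beta.beta s' t')

/-- head steps from a non-lambda source -/
def HeadNL : Tm F → Tm F → Prop := fun x y => Head x y ∧ NL x

theorem headNLstar_head {s t : Tm F} (h : Relation.ReflTransGen (HeadNL (F := F)) s t) :
    Relation.ReflTransGen Head s t :=
  Relation.ReflTransGen.mono (fun _ _ h => h.1) _ _ h

theorem headstar_lam {s t : Tm F} (h : Relation.ReflTransGen Head s t) :
    Relation.ReflTransGen Head (Tm.lam s) (Tm.lam t) :=
  Relation.ReflTransGen.lift Tm.lam (fun _ _ h => Head.lam h) _ _ h

theorem headNLstar_app {s t : Tm F} (u : Tm F)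
    (h : Relation.ReflTransGen (HeadNL (F := F)) s t) :
    Relation.ReflTransGen (HeadNL (F := F)) (Tm.app s u) (Tm.app t u) :=
  Relation.ReflTransGen.lift (fun x => Tm.app x u)
    (fun _ _ h => ⟨Head.app u h.1 h.2, fun c => by simp⟩) _ _ h

theorem headNLstar_subst {s t : Tm F} (k : ℕ) (u : Tm F)
    (h : Relation.ReflTransGen (HeadNL (F := F)) s t) :
    Relation.ReflTransGen (HeadNL (F := F)) (subst s k u) (subst t k u) := by
  refine Relation.ReflTransGen.lift (fun x => subst x k u) (fun a b h => ?_) _ _ h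
  obtain ⟨x, y, rfl⟩ := head_shape_app h.1 h.2
  exact ⟨head_subst h.1 k u, fun c => by simp [subst]⟩

end Reductions
section Standardize

variable {F : Type}

open Tm

/-- Internal parallel reduction: a parallel step not touching the head position. -/
inductive PBI : Tm F → Tm F → Prop
  | var (n : ℕ) : PBI (Tm.var n) (Tm.var n)
  | const (f : F) : PBI (Tm.const f) (Tm.const f)
  | lam {s s'} : PB s s' → PBI (Tm.lam s) (Tm.lam s')
  | app {s s' t t'} : PBI s s' → NL s → PB t t' → PBI (Tm.app s t) (Tm.app s' t')
  | appRedex {c c' t t'} : PB c c' → PB t t' →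
      PBI (Tm.app (Tm.lam c) t) (Tm.app (Tm.lam c') t')

theorem pbi_refl (t : Tm F) : PBI t t := by
  induction t with
  | const f => exact PBI.const f
  | var n => exact PBI.var n
  | lam s ih => exact PBI.lam (PB.refl s)
  | app s t ihs iht =>
    cases s with
    | lam c => exact PBI.appRedex (PB.refl c) (PB.refl t)
    | const f => exact PBI.app ihs (by intro b; simp) (PB.refl t)
    | var n => exact PBI.app ihs (by intro b; simp) (PB.refl t)
    | app a b => exact PBI.app ihs (by intro b; simp) (PB.refl t)

theorem pbi_nl {s s' : Tm F} (h : PBI s s') (nl : NL s) : NL s' := by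
  cases h with
  | var n => exact nl
  | const f => exact nl
  | lam h => exact absurd rfl (nl _)
  | app h1 hnl h2 => intro b; simp
  | appRedex h1 h2 => intro b; simp

theorem pbi_lam_inv {c : Tm F} {x : Tm F} (h : PBI (Tm.lam c) x) :
    ∃ c', x = Tm.lam c' ∧ PB c c' := by
  cases h with
  | lam h => exact ⟨_, rfl, h⟩

theorem pbi_pb_subst {p p' : Tm F} (h : PBI p p') :
    ∀ k {q q' : Tm F}, PB q q' → PB (subst p k q) (subst p' k q') := by
  intro k q q' hq
  induction h with
  | var n => exact pb_subst (PB.refl _) k hq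
  | const f => exact PB.refl _
  | lam h => exact pb_subst (PB.lam h) k hq
  | app h1 nl h2 ih => exact PB.app ih (pb_subst h2 k hq)
  | appRedex h1 h2 => exact pb_subst (PB.app (PB.lam h1) h2) k hq

/-- Substitution lemma for decomposition data. -/
theorem pbi_subst {p p' : Tm F} (h : PBI p p') :
    ∀ k {q q' q₀ : Tm F}, PB q q' → Relation.ReflTransGen (HeadNL (F := F)) q q₀ → PBI q₀ q' →
    ∃ w, Relation.ReflTransGen (HeadNL (F := F)) (subst p k q) w ∧ PBI w (subst p' k q') := by
  induction h with
  | var n =>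
    intro k q q' q₀ hq hsq hq₀
    by_cases h1 : n = k
    · subst h1
      refine ⟨q₀, ?_, ?_⟩
      · simp only [subst_var, if_pos rfl]; exact hsq
      · simp only [subst_var, if_pos rfl]; exact hq₀
    · refine ⟨subst (Tm.var n) k q, .refl, ?_⟩
      simp only [subst_var, if_neg h1]
      split_ifs <;> exact pbi_refl _
  | const f => intro k q q' q₀ hq hsq hq₀; exact ⟨_, .refl, pbi_refl _⟩
  | @lam c c' h =>
    intro k q q' q₀ hq hsq hq₀
    refine ⟨_, .refl, ?_⟩
    simp only [subst]
    exact PBI.lam (pb_subst h (k+1) (pb_lift hq 0))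
  | @app a a' b b' h1 nl h2 ih =>
    intro k q q' q₀ hq hsq hq₀
    obtain ⟨wa, hwa, hwa'⟩ := ih k hq hsq hq₀
    simp only [subst]
    cases wa with
    | lam c₀ =>
      obtain ⟨c', hc', hpb⟩ := pbi_lam_inv hwa'
      rw [hc']
      exact ⟨Tm.app (Tm.lam c₀) (subst b k q), headNLstar_app _ hwa,
        PBI.appRedex hpb (pb_subst h2 k hq)⟩
    | var n =>
      exact ⟨_, headNLstar_app _ hwa, PBI.app hwa' (by intro c; simp) (pb_subst h2 k hq)⟩
    | const f =>
      exact ⟨_, headNLstar_app _ hwa, PBI.app hwa' (by intro c; simp) (pb_subst h2 k hq)⟩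
    | app x y =>
      exact ⟨_, headNLstar_app _ hwa, PBI.app hwa' (by intro c; simp) (pb_subst h2 k hq)⟩
  | @appRedex c c' b b' h1 h2 =>
    intro k q q' q₀ hq hsq hq₀
    refine ⟨_, .refl, ?_⟩
    simp only [subst]
    exact PBI.appRedex (pb_subst h1 (k+1) (pb_lift hq 0)) (pb_subst h2 k hq)

/-- Decomposition of a parallel step into head steps followed by an internal step. -/
theorem pb_decomp {s t : Tm F} (h : PB s t) :
    ∃ u, Relation.ReflTransGen (HeadNL (F := F)) s u ∧ PBI u t := by
  induction h with
  | refl t => exact ⟨t, .refl, pbi_refl t⟩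
  | lam h ih => exact ⟨_, .refl, PBI.lam h⟩
  | @app a a' b b' h1 h2 ih1 ih2 =>
    obtain ⟨u₁, hu₁, hu₁'⟩ := ih1
    cases u₁ with
    | lam c =>
      obtain ⟨c'', hc'', hpb⟩ := pbi_lam_inv hu₁'
      rw [hc'']
      exact ⟨Tm.app (Tm.lam c) b, headNLstar_app _ hu₁, PBI.appRedex hpb h2⟩
    | var n => exact ⟨_, headNLstar_app _ hu₁, PBI.app hu₁' (by intro c; simp) h2⟩
    | const f => exact ⟨_, headNLstar_app _ hu₁, PBI.app hu₁' (by intro c; simp) h2⟩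
    | app x y => exact ⟨_, headNLstar_app _ hu₁, PBI.app hu₁' (by intro c; simp) h2⟩
  | @beta p p' q q' h1 h2 ih1 ih2 =>
    obtain ⟨p₀, hp₀, hp₀'⟩ := ih1
    obtain ⟨q₀, hq₀, hq₀'⟩ := ih2
    obtain ⟨w, hw, hw'⟩ := pbi_subst hp₀' 0 h2 hq₀ hq₀'
    refine ⟨w, ?_, hw'⟩
    refine Relation.ReflTransGen.head ⟨Head.beta p q, by intro c; simp⟩ ?_
    exact .trans (headNLstar_subst 0 q hp₀) hw

end Standardize
section Spine

variable {F : Type}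

open Tm

theorem stripLam_lam (s : Tm F) : stripLam (Tm.lam s) = stripLam s := rfl
theorem stripLam_app (s t : Tm F) : stripLam (Tm.app s t) = Tm.app s t := rfl
theorem stripLam_var (n : ℕ) : stripLam (Tm.var n : Tm F) = Tm.var n := rfl
theorem stripLam_const (f : F) : stripLam (Tm.const f) = Tm.const f := rfl
theorem spineHead_app (s t : Tm F) : spineHead (Tm.app s t) = spineHead s := rfl
theorem spineArgs_app (s t : Tm F) : spineArgs (Tm.app s t) = spineArgs s ++ [t] := rfl

theorem stripLam_nl {x : Tm F} (h : NL x) : stripLam x = x := by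
  cases x with
  | lam c => exact absurd rfl (h c)
  | var n => rfl
  | const f => rfl
  | app a b => rfl

/-- head form: the head of the spine is a variable or a constant -/
def HForm (s : Tm F) : Prop :=
  (∃ n : ℕ, spineHead (stripLam s) = Tm.var n) ∨ (∃ f : F, spineHead (stripLam s) = Tm.const f)

def Args (s : Tm F) : List (Tm F) := spineArgs (stripLam s)

theorem sizeOf_pos (t : Tm F) : 0 < sizeOf t := by
  cases t <;> simp <;> omega

theorem hform_lam {c : Tm F} : HForm (Tm.lam c) ↔ HForm c := Iff.rfl

end Spine

section Commute

variable {F : Type}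

open Tm

/-- Internal steps then a head step can be rearranged to head steps then a parallel step. -/
theorem pbi_head_commute : ∀ (N : ℕ) (t : Tm F), sizeOf t ≤ N → ∀ s, PBI s t →
    ∀ t₁, Head t t₁ →
    ∃ s₁, Relation.ReflTransGen Head s s₁ ∧
      (NL s → Relation.ReflTransGen (HeadNL (F := F)) s s₁) ∧ PB s₁ t₁ := by
  intro N
  induction N with
  | zero => intro t ht; exact absurd ht (by have := sizeOf_pos t; omega)
  | succ n ih =>
    intro t ht s hpbi t₁ ht₁
    cases hpbi with
    | var m => cases ht₁
    | const f => cases ht₁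
    | @lam c c' hpb =>
      cases ht₁ with
      | @lam _ c₁' hh =>
        obtain ⟨c₀, hc₀, hc₀'⟩ := pb_decomp hpb
        obtain ⟨s₁, hs₁, _, hs₁'⟩ := ih c' (by simp at ht ⊢; omega) c₀ hc₀' c₁' hh
        refine ⟨Tm.lam s₁, headstar_lam (.trans (headNLstar_head hc₀) hs₁), ?_, PB.lam hs₁'⟩
        intro hnl; exact absurd rfl (hnl c)
    | @app a a' b b' h1 nl h2 =>
      cases ht₁ with
      | beta p q => exact absurd rfl (pbi_nl h1 nl _)
      | @app _ a₁' _ hh hnl' =>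
        obtain ⟨s₁, _, hs₁c, hs₁'⟩ := ih a' (by simp at ht ⊢; omega) a h1 a₁' hh
        have hrs : Relation.ReflTransGen (HeadNL (F := F)) a s₁ := hs₁c nl
        refine ⟨Tm.app s₁ b, headNLstar_head (headNLstar_app b hrs), ?_, PB.app hs₁' h2⟩
        intro _; exact headNLstar_app b hrs
    | @appRedex c c' d d' h1 h2 =>
      cases ht₁ with
      | beta p q =>
        refine ⟨subst c 0 d, .single (Head.beta c d), ?_, pb_subst h1 0 h2⟩
        intro _; exact .single ⟨Head.beta c d, by intro x; simp⟩
      | app _ hh hnl' => exact absurd rfl (hnl' c')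

/-- Internal step into a head form yields head reduction to a matching head form. -/
theorem pbi_headform : ∀ (N : ℕ) (u : Tm F), sizeOf u ≤ N → ∀ s, PBI s u → HForm u →
    ∃ w, Relation.ReflTransGen Head s w ∧
      (NL s → Relation.ReflTransGen (HeadNL (F := F)) s w) ∧
      (NL s → NL w) ∧ HForm w ∧
      ∀ b ∈ Args w, ∃ c ∈ Args u, PB b c := by
  intro N
  induction N with
  | zero => intro u hu; exact absurd hu (by have := sizeOf_pos u; omega)
  | succ n ih =>
    intro u hu s hpbi hform
    cases hpbi with
    | var m =>
      refine ⟨Tm.var m, .refl, fun _ => .refl, fun h => h, hform, ?_⟩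
      intro b hb; simp [Args, stripLam_var, spineArgs] at hb
    | const f =>
      refine ⟨Tm.const f, .refl, fun _ => .refl, fun h => h, hform, ?_⟩
      intro b hb; simp [Args, stripLam_const, spineArgs] at hb
    | @lam c c' hpb =>
      obtain ⟨c₀, hc₀, hc₀'⟩ := pb_decomp hpb
      obtain ⟨w₀, hw₀, _, _, hwf, hargs⟩ :=
        ih c' (by simp at hu ⊢; omega) c₀ hc₀' (hform_lam.mp hform)
      refine ⟨Tm.lam w₀, headstar_lam (.trans (headNLstar_head hc₀) hw₀),
        fun hnl => absurd rfl (hnl c), fun hnl => absurd rfl (hnl c),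
        hform_lam.mpr hwf, ?_⟩
      intro b hb
      exact hargs b hb
    | @app a a' b b' h1 nl h2 =>
      have nl' : NL a' := pbi_nl h1 nl
      have hform' : HForm a' := by
        rcases hform with ⟨m, hm⟩ | ⟨f, hf⟩
        · left; exact ⟨m, by rwa [stripLam_nl nl', ← spineHead_app a' b', ← stripLam_app]⟩
        · right; exact ⟨f, by rwa [stripLam_nl nl', ← spineHead_app a' b', ← stripLam_app]⟩
      obtain ⟨w', hw', hwc, hwnl, hwf, hargs⟩ :=
        ih a' (by simp at hu ⊢; omega) a h1 hform'
      have hrs : Relation.ReflTransGen (HeadNL (F := F)) a w' := hwc nl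
      have nlw : NL w' := hwnl nl
      refine ⟨Tm.app w' b, headNLstar_head (headNLstar_app b hrs),
        fun _ => headNLstar_app b hrs, fun _ x => by simp, ?_, ?_⟩
      · rcases hwf with ⟨m, hm⟩ | ⟨f, hf⟩
        · left; refine ⟨m, ?_⟩
          rw [stripLam_app, spineHead_app, ← stripLam_nl nlw]; exact hm
        · right; refine ⟨f, ?_⟩
          rw [stripLam_app, spineHead_app, ← stripLam_nl nlw]; exact hf
      · intro x hx
        rw [Args, stripLam_app, spineArgs_app] at hx
        rcases List.mem_append.mp hx with hx | hx
        · rw [← stripLam_nl nlw] at hx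
          obtain ⟨c, hc, hpc⟩ := hargs x hx
          rw [Args, stripLam_nl nl'] at hc
          refine ⟨c, ?_, hpc⟩
          rw [Args, stripLam_app, spineArgs_app]
          exact List.mem_append_left _ hc
        · simp at hx; subst hx
          refine ⟨b', ?_, h2⟩
          rw [Args, stripLam_app, spineArgs_app]
          exact List.mem_append_right _ (by simp)
    | @appRedex c c' d d' h1 h2 =>
      exfalso
      rcases hform with ⟨m, hm⟩ | ⟨f, hf⟩
      · rw [stripLam_app, spineHead_app] at hm; exact absurd hm (by simp [spineHead])
      · rw [stripLam_app, spineHead_app] at hf; exact absurd hf (by simp [spineHead])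

end Commute
section HNsec

variable {F : Type}

open Tm

/-- Inductive characterization of head-normalizing terms with normalizing arguments. -/
inductive HN : Tm F → Prop
  | base {s : Tm F} : HForm s → (∀ a ∈ Args s, HN a) → HN s
  | hstep {s t : Tm F} : Head s t → HN t → HN s

theorem hn_headstar {s u : Tm F} (h : Relation.ReflTransGen Head s u) (hu : HN u) : HN s := by
  induction h using Relation.ReflTransGen.head_induction_on with
  | refl => exact hu
  | head h' _ ih => exact HN.hstep h' ih

/-- One parallel step into a head-reducing-to-head-form term. -/
theorem pb_headform {t u : Tm F} (htu : Relation.ReflTransGen Head t u) (hfu : HForm u) :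
    ∀ s, PB s t →
    ∃ w, Relation.ReflTransGen Head s w ∧ HForm w ∧
      ∀ b ∈ Args w, ∃ c ∈ Args u, Relation.ReflTransGen Beta b c := by
  induction htu using Relation.ReflTransGen.head_induction_on with
  | refl =>
    intro s hs
    obtain ⟨s₀, hs₀, hs₀'⟩ := pb_decomp hs
    obtain ⟨w, hw, _, _, hwf, hargs⟩ := pbi_headform (sizeOf u) u le_rfl s₀ hs₀' hfu
    refine ⟨w, .trans (headNLstar_head hs₀) hw, hwf, ?_⟩
    intro b hb
    obtain ⟨c, hc, hpc⟩ := hargs b hb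
    exact ⟨c, hc, pb_betastar hpc⟩
  | @head t t₂ h' h ih =>
    intro s hs
    obtain ⟨s₀, hs₀, hs₀'⟩ := pb_decomp hs
    obtain ⟨s₁, hs₁, _, hs₁'⟩ := pbi_head_commute (sizeOf t) t le_rfl s₀ hs₀' t₂ h'
    obtain ⟨w, hw, hwf, hargs⟩ := ih s₁ hs₁'
    exact ⟨w, .trans (headNLstar_head hs₀) (.trans hs₁ hw), hwf, hargs⟩

/-- Many parallel steps into a head form. -/
theorem pbstar_headform {s t : Tm F} (h : Relation.ReflTransGen PB s t) (hf : HForm t) :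
    ∃ w, Relation.ReflTransGen Head s w ∧ HForm w ∧
      ∀ b ∈ Args w, ∃ c ∈ Args t, Relation.ReflTransGen Beta b c := by
  induction h using Relation.ReflTransGen.head_induction_on with
  | refl => exact ⟨t, .refl, hf, fun b hb => ⟨b, hb, .refl⟩⟩
  | @head s s₂ h' h ih =>
    obtain ⟨w₂, hw₂, hw₂f, hargs₂⟩ := ih
    obtain ⟨w, hw, hwf, hargs⟩ := pb_headform hw₂ hw₂f s h'
    refine ⟨w, hw, hwf, ?_⟩
    intro b hb
    obtain ⟨c, hc, hbc⟩ := hargs b hb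
    obtain ⟨c', hc', hcc'⟩ := hargs₂ c hc
    exact ⟨c', hc', .trans hbc hcc'⟩

/-- `HN` is closed under beta-expansion (many steps). -/
theorem betastar_hn : ∀ t : Tm F, HN t → ∀ s, Relation.ReflTransGen Beta s t → HN s := by
  intro t h
  induction h with
  | @base t hf hargs ih =>
    intro s hst
    have hpb : Relation.ReflTransGen PB s t := Relation.ReflTransGen.mono (fun _ _ h => beta_pb h) _ _ hst
    obtain ⟨w, hw, hwf, hargsw⟩ := pbstar_headform hpb hf
    refine hn_headstar hw (HN.base hwf ?_)
    intro b hb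
    obtain ⟨c, hc, hbc⟩ := hargsw b hb
    exact ih c hc b hbc
  | @hstep t t₁ hh _ ih =>
    intro s hst
    exact ih s (.tail hst (head_beta hh))

theorem nf_app_left {a b : Tm F} (h : BetaNF (Tm.app a b)) : BetaNF a :=
  fun u hu => h (Tm.app u b) (Beta.appL b hu)

theorem nf_app_right {a b : Tm F} (h : BetaNF (Tm.app a b)) : BetaNF b :=
  fun u hu => h (Tm.app a u) (Beta.appR a hu)

theorem nf_lam {c : Tm F} (h : BetaNF (Tm.lam c)) : BetaNF c :=
  fun u hu => h (Tm.lam u) (Beta.lam hu)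

theorem nf_spinehead : ∀ x : Tm F, BetaNF x → (∃ a b, x = Tm.app a b) →
    (∃ m, spineHead x = Tm.var m) ∨ (∃ f, spineHead x = Tm.const f) := by
  intro x
  induction x with
  | const f => rintro _ ⟨a, b, h⟩; exact absurd h (by simp)
  | var n => rintro _ ⟨a, b, h⟩; exact absurd h (by simp)
  | lam c _ => rintro _ ⟨a, b, h⟩; exact absurd h (by simp)
  | app a b iha _ =>
    rintro hnf -
    cases a with
    | lam c => exact absurd (Beta.beta c b) (hnf _)
    | var m => exact Or.inl ⟨m, rfl⟩
    | const f => exact Or.inr ⟨f, rfl⟩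
    | app x y =>
      rw [spineHead_app]
      exact iha (nf_app_left hnf) ⟨x, y, rfl⟩

theorem mem_spineArgs_size {x : Tm F} : ∀ a ∈ spineArgs x, sizeOf a < sizeOf x := by
  induction x with
  | const f => intro a ha; exact absurd ha (by simp [spineArgs])
  | var n => intro a ha; exact absurd ha (by simp [spineArgs])
  | lam c _ => intro a ha; exact absurd ha (by simp [spineArgs])
  | app s t ihs _ =>
    intro a ha
    rw [spineArgs_app] at ha
    rcases List.mem_append.mp ha with ha | ha
    · have := ihs a ha; simp; omega
    · simp at ha; subst ha; simp only [Tm.app.sizeOf_spec]; omega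

theorem mem_spineArgs_nf {x : Tm F} (hnf : BetaNF x) : ∀ a ∈ spineArgs x, BetaNF a := by
  induction x with
  | const f => intro a ha; exact absurd ha (by simp [spineArgs])
  | var n => intro a ha; exact absurd ha (by simp [spineArgs])
  | lam c _ => intro a ha; exact absurd ha (by simp [spineArgs])
  | app s t ihs _ =>
    intro a ha
    rw [spineArgs_app] at ha
    rcases List.mem_append.mp ha with ha | ha
    · exact ihs (nf_app_left hnf) a ha
    · simp at ha; subst ha; exact nf_app_right hnf

theorem hn_lam {c : Tm F} (h : HN c) : HN (Tm.lam c) := by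
  induction h with
  | base hf hargs ih => exact HN.base (hform_lam.mpr hf) hargs
  | hstep hh _ ih => exact HN.hstep (Head.lam hh) ih

/-- Beta-normal forms are `HN`. -/
theorem nf_hn : ∀ (N : ℕ) (t : Tm F), sizeOf t ≤ N → BetaNF t → HN t := by
  intro N
  induction N with
  | zero => intro t ht; exact absurd ht (by have := sizeOf_pos t; omega)
  | succ n ih =>
    intro t ht hnf
    cases t with
    | var m =>
      refine HN.base (Or.inl ⟨m, rfl⟩) ?_
      intro a ha; exact absurd ha (by simp [Args, stripLam_var, spineArgs])
    | const f =>
      refine HN.base (Or.inr ⟨f, rfl⟩) ?_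
      intro a ha; exact absurd ha (by simp [Args, stripLam_const, spineArgs])
    | lam c =>
      exact hn_lam (ih c (by simp at ht ⊢; omega) (nf_lam hnf))
    | app a b =>
      refine HN.base ?_ ?_
      · exact nf_spinehead (Tm.app a b) hnf ⟨a, b, rfl⟩
      · intro x hx
        rw [Args, stripLam_app] at hx
        have h1 := mem_spineArgs_size x hx
        have h2 := mem_spineArgs_nf hnf x hx
        exact ih x (by omega) h2

theorem wn_hn {s : Tm F} (h : WN s) : HN s := by
  obtain ⟨t, hst, hnf⟩ := h
  exact betastar_hn t (nf_hn (sizeOf t) t le_rfl hnf) s hst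

end HNsec
section Renaming

variable {F : Type}

open Tm

theorem lift_app (d : ℕ) (s t : Tm F) :
    lift d (Tm.app s t) = Tm.app (lift d s) (lift d t) := rfl
theorem lift_lam (d : ℕ) (s : Tm F) : lift d (Tm.lam s) = Tm.lam (lift (d+1) s) := rfl
theorem subst_app (s t : Tm F) (k u) :
    subst (Tm.app s t) k u = Tm.app (subst s k u) (subst t k u) := rfl
theorem subst_lam (s : Tm F) (k u) :
    subst (Tm.lam s) k u = Tm.lam (subst s (k+1) (lift 0 u)) := rfl
theorem spineHead_lam (s : Tm F) : spineHead (Tm.lam s) = Tm.lam s := rfl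
theorem spineArgs_lam (s : Tm F) : spineArgs (Tm.lam s) = [] := rfl

/-- apply a variable renaming -/
def ren (ρ : ℕ → ℕ) (t : Tm F) : Tm F := applySubst (fun n => Tm.var (ρ n)) t

def upRen (ρ : ℕ → ℕ) : ℕ → ℕ := fun n => match n with
  | 0 => 0
  | m + 1 => ρ m + 1

def liftRen (k : ℕ) (ρ : ℕ → ℕ) : ℕ → ℕ := fun n => if n < k then n else ρ (n - k) + k

theorem applySubst_congr {σ τ : ℕ → Tm F} (h : ∀ n, σ n = τ n) :
    ∀ t, applySubst σ t = applySubst τ t := by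
  intro t
  induction t generalizing σ τ with
  | const f => rfl
  | var n => exact h n
  | app s t ihs iht => simp only [applySubst]; rw [ihs h, iht h]
  | lam s ih =>
    simp only [applySubst]
    congr 1
    refine ih ?_
    intro n
    cases n with
    | zero => rfl
    | succ m => simp only [h m]

theorem ren_congr {ρ ρ' : ℕ → ℕ} (h : ∀ n, ρ n = ρ' n) (t : Tm F) :
    ren ρ t = ren ρ' t :=
  applySubst_congr (fun n => congrArg Tm.var (h n)) t

theorem ren_const (ρ : ℕ → ℕ) (f : F) : ren ρ (Tm.const f) = Tm.const f := rfl
theorem ren_var (ρ : ℕ → ℕ) (n : ℕ) : ren ρ (Tm.var n : Tm F) = Tm.var (ρ n) := rfl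
theorem ren_app (ρ : ℕ → ℕ) (s t : Tm F) :
    ren ρ (Tm.app s t) = Tm.app (ren ρ s) (ren ρ t) := rfl

theorem ren_lam (ρ : ℕ → ℕ) (c : Tm F) :
    ren ρ (Tm.lam c) = Tm.lam (ren (upRen ρ) c) := by
  show Tm.lam _ = Tm.lam _
  congr 1
  refine applySubst_congr ?_ c
  intro n
  cases n with
  | zero => rfl
  | succ m =>
    show Tm.lift 0 (Tm.var (ρ m)) = Tm.var (ρ m + 1)
    rw [lift_var, if_neg (by omega)]

theorem upRen_liftRen (k : ℕ) (ρ : ℕ → ℕ) :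
    ∀ n, upRen (liftRen k ρ) n = liftRen (k+1) ρ n := by
  intro n
  cases n with
  | zero => simp [upRen, liftRen]
  | succ m =>
    simp only [upRen, liftRen]
    split_ifs <;>
      first
        | rfl
        | omega
        | (rw [show m + 1 - (k+1) = m - k from by omega]; omega)

theorem liftRen_zero (ρ : ℕ → ℕ) : ∀ n, liftRen 0 ρ n = ρ n := by
  intro n; simp [liftRen]

theorem ren_lift (q : Tm F) : ∀ (ρ : ℕ → ℕ) k j, j ≤ k →
    ren (liftRen (k+1) ρ) (lift j q) = lift j (ren (liftRen k ρ) q) := by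
  induction q with
  | const f => intros; rfl
  | var n =>
    intro ρ k j h
    simp only [lift_var, ren_var, liftRen]
    split_ifs <;> (try simp only [ren_var, lift_var, liftRen]) <;> (try split_ifs) <;>
      first
        | rfl
        | (exfalso; omega)
        | (congr 1; omega)
        | (congr 1; rw [show n + 1 - (k+1) = n - k from by omega]; omega)
  | app s t ihs iht =>
    intro ρ k j h
    rw [lift_app, ren_app, ren_app, lift_app, ihs ρ k j h, iht ρ k j h]
  | lam s ih =>
    intro ρ k j h
    rw [lift_lam, ren_lam, ren_lam, lift_lam]
    congr 1
    rw [ren_congr (upRen_liftRen (k+1) ρ) (lift (j+1) s),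
      ren_congr (upRen_liftRen k ρ) s]
    exact ih ρ (k+1) (j+1) (by omega)

theorem ren_subst (p : Tm F) : ∀ (ρ : ℕ → ℕ) k (q : Tm F),
    ren (liftRen k ρ) (subst p k q) =
      subst (ren (liftRen (k+1) ρ) p) k (ren (liftRen k ρ) q) := by
  induction p with
  | const f => intros; rfl
  | var n =>
    intro ρ k q
    simp only [subst_var, ren_var, liftRen]
    split_ifs <;> (try simp only [subst_var, ren_var, lift_var, liftRen]) <;> (try split_ifs) <;>
      first
        | rfl
        | (exfalso; omega)
        | (congr 1; omega)
        | (congr 1; rw [show n - 1 - k = n - (k+1) from by omega]; omega)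
        | (congr 1; rw [show n - (k+1) = n - 1 - k from by omega]; omega)
  | app s t ihs iht =>
    intro ρ k q
    rw [subst_app, ren_app, ren_app, subst_app, ihs ρ k q, iht ρ k q]
  | lam s ih =>
    intro ρ k q
    rw [subst_lam, ren_lam, ren_lam, subst_lam]
    congr 1
    rw [ren_congr (upRen_liftRen k ρ) (subst s (k+1) (lift 0 q)),
      ren_congr (upRen_liftRen (k+1) ρ) s, ih ρ (k+1) (lift 0 q)]
    congr 1
    exact ren_lift q ρ k 0 (by omega)

theorem ren_subst0 (p : Tm F) (ρ : ℕ → ℕ) (q : Tm F) :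
    ren ρ (subst p 0 q) = subst (ren (upRen ρ) p) 0 (ren ρ q) := by
  have h := ren_subst p ρ 0 q
  rw [ren_congr (liftRen_zero ρ) (subst p 0 q), ren_congr (liftRen_zero ρ) q] at h
  rw [h]
  congr 1
  refine (ren_congr ?_ p).symm
  intro n
  cases n with
  | zero => rfl
  | succ m => simp [upRen, liftRen]

theorem head_ren {s t : Tm F} (h : Head s t) : ∀ ρ, Head (ren ρ s) (ren ρ t) := by
  induction h with
  | beta s t =>
    intro ρ
    rw [ren_subst0 s ρ t, ren_app, ren_lam]
    exact Head.beta _ _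
  | app t h nl ih =>
    intro ρ
    rw [ren_app, ren_app]
    obtain ⟨a, b, rfl⟩ := head_shape_app h nl
    exact Head.app _ (ih ρ) (by intro c; rw [ren_app]; simp)
  | lam h ih =>
    intro ρ
    rw [ren_lam, ren_lam]
    exact Head.lam (ih (upRen ρ))

theorem head_det {s t u : Tm F} (h1 : Head s t) : Head s u → t = u := by
  induction h1 generalizing u with
  | beta a b =>
    intro h2
    cases h2 with
    | beta => rfl
    | app t h nl => exact absurd rfl (nl a)
  | app t h nl ih =>
    intro h2
    cases h2 with
    | beta a b => exact absurd rfl (nl a)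
    | app t' h' nl' => rw [ih h']
  | lam h ih =>
    intro h2
    cases h2 with
    | lam h' => rw [ih h']

theorem head_spine {s t : Tm F} (h : Head s t) :
    ∃ b, spineHead (stripLam s) = Tm.lam b := by
  induction h with
  | beta a b => exact ⟨a, rfl⟩
  | app t h nl ih =>
    obtain ⟨x, y, rfl⟩ := head_shape_app h nl
    rw [stripLam_app, spineHead_app]
    rw [stripLam_app] at ih
    exact ih
  | lam h ih => rwa [stripLam_lam]

theorem spineHead_ren : ∀ (x : Tm F) (ρ : ℕ → ℕ),
    spineHead (ren ρ x) = ren ρ (spineHead x) := by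
  intro x
  induction x with
  | const f => intro ρ; rfl
  | var n => intro ρ; rfl
  | lam c _ => intro ρ; rw [ren_lam, spineHead_lam, spineHead_lam, ren_lam]
  | app s t ihs _ => intro ρ; rw [ren_app, spineHead_app, spineHead_app, ihs]

theorem spineArgs_ren : ∀ (x : Tm F) (ρ : ℕ → ℕ),
    spineArgs (ren ρ x) = (spineArgs x).map (ren ρ) := by
  intro x
  induction x with
  | const f => intro ρ; rfl
  | var n => intro ρ; rfl
  | lam c _ => intro ρ; rw [ren_lam, spineArgs_lam, spineArgs_lam]; rfl
  | app s t ihs _ =>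
    intro ρ
    rw [ren_app, spineArgs_app, spineArgs_app, ihs]
    simp

theorem stripLam_ren : ∀ (x : Tm F) (ρ : ℕ → ℕ),
    ∃ ρ', stripLam (ren ρ x) = ren ρ' (stripLam x) := by
  intro x
  induction x with
  | const f => intro ρ; exact ⟨ρ, rfl⟩
  | var n => intro ρ; exact ⟨ρ, rfl⟩
  | lam c ih =>
    intro ρ
    rw [ren_lam, stripLam_lam, stripLam_lam]
    exact ih (upRen ρ)
  | app s t _ _ => intro ρ; exact ⟨ρ, rfl⟩

theorem ren_comp (x : Tm F) : ∀ (ρ₁ ρ₂ : ℕ → ℕ),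
    ren ρ₂ (ren ρ₁ x) = ren (fun n => ρ₂ (ρ₁ n)) x := by
  induction x with
  | const f => intros; rfl
  | var n => intros; rfl
  | app s t ihs iht => intro ρ₁ ρ₂; rw [ren_app, ren_app, ren_app, ihs, iht]
  | lam c ih =>
    intro ρ₁ ρ₂
    rw [ren_lam, ren_lam, ren_lam, ih]
    congr 1
    refine ren_congr ?_ c
    intro n
    cases n with
    | zero => rfl
    | succ m => rfl

theorem ren_id (x : Tm F) : ren (fun n => n) x = x := by
  induction x with
  | const f => rfl
  | var n => rfl
  | app s t ihs iht => rw [ren_app, ihs, iht]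
  | lam c ih =>
    rw [ren_lam]
    congr 1
    rw [ren_congr (ρ' := fun n => n) (fun n => by cases n <;> rfl) c]
    exact ih

end Renaming
section Final

variable {F : Type}

open Tm

theorem hn_acc {s : Tm F} (h : HN s) : ∀ ρ, Acc (fun t s : Tm F => Succ s t) (ren ρ s) := by
  induction h with
  | @base s hf hargs ih =>
    intro ρ
    constructor
    intro t₂ h₂
    cases h₂ with
    | head hh =>
      exfalso
      obtain ⟨b, hb⟩ := head_spine hh
      obtain ⟨ρ', hst⟩ := stripLam_ren s ρ
      rw [hst, spineHead_ren] at hb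
      rcases hf with ⟨m, hm⟩ | ⟨f, hf'⟩
      · rw [hm, ren_var] at hb; exact absurd hb (by simp)
      · rw [hf', ren_const] at hb; exact absurd hb (by simp)
    | arg hform hmem hlen hren =>
      obtain ⟨ρ', hst⟩ := stripLam_ren s ρ
      rw [hst, spineArgs_ren] at hmem
      obtain ⟨a, ha, rfl⟩ := List.mem_map.mp hmem
      obtain ⟨ρ₂, rfl⟩ := hren
      show Acc _ (ren ρ₂ (ren ρ' a))
      rw [ren_comp]
      exact ih a ha (fun n => ρ₂ (ρ' n))
  | @hstep s s' hh _ ih =>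
    intro ρ
    constructor
    intro t₂ h₂
    cases h₂ with
    | head hh₂ =>
      have e := head_det hh₂ (head_ren hh ρ)
      rw [e]
      exact ih ρ
    | arg hform hmem hlen hren =>
      exfalso
      obtain ⟨b, hb⟩ := head_spine (head_ren hh ρ)
      rcases hform with ⟨m, hm⟩ | ⟨f, hf'⟩
      · rw [hm] at hb; exact absurd hb (by simp)
      · rw [hf'] at hb; exact absurd hb (by simp)

theorem acc_on_subtype {α : Type _} {r : α → α → Prop} {p : α → Prop} :
    ∀ {x : α}, Acc r x → ∀ h : p x, Acc (fun a b : {z // p z} => r a.1 b.1) ⟨x, h⟩ := by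
  intro x hx
  induction hx with
  | intro x _ ih =>
    intro h
    constructor
    rintro ⟨y, hy⟩ hr
    exact ih y hr hy

end Final
/-- `≻` is well-founded on the set of weakly beta-normalizing
terms. -/
theorem succ_wellFounded {F : Type} :
    Set.WellFoundedOn {s : Tm F | WN s} (fun t s => Succ s t) := by
  constructor
  rintro ⟨x, hx⟩
  have hacc : Acc (fun t s : Tm F => Succ s t) x := by
    have h := hn_acc (wn_hn hx) (fun n => n)
    rwa [ren_id] at h
  exact acc_on_subtype hacc hx

end CondConf
end

section
/- For each level i, the nested parallel conditional rewrite relation ⇒_{A_i} commutes with one-step head beta-reduction →h: if u ←h s ⇒_{A_i} t then there exists v with u ⇒_{A_i} v ←h t. -/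
namespace CondConf

/-- A conditional rewrite rule `d⃗ = c⃗ ⊃ l → r`. -/
structure Rule (F : Type) where
  lhs : Tm F
  rhs : Tm F
  conds : List (Tm F × Tm F)

/-- Joinability for a relation: `a ↓ b` iff `a →* c ←* b` for some `c`. -/
def Joinable {α : Type*} (r : α → α → Prop) (a b : α) : Prop :=
  ∃ c : α, Relation.ReflTransGen r a c ∧ Relation.ReflTransGen r b c

/-- Closure of a relation under the term formation rules (contexts). -/
inductive Ctx {F : Type} (base : Tm F → Tm F → Prop) : Tm F → Tm F → Prop
  | base {s t} : base s t → Ctx base s t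
  | appL {s s'} (t) : Ctx base s s' → Ctx base (Tm.app s t) (Tm.app s' t)
  | appR (s) {t t'} : Ctx base t t' → Ctx base (Tm.app s t) (Tm.app s t')
  | lam {s s'} : Ctx base s s' → Ctx base (Tm.lam s) (Tm.lam s')

/-- Root rewrite steps: rule instances whose instantiated conditions are
joinable for the relation `prev`. -/
def Aroot {F : Type} (R : Set (Rule F)) (prev : Tm F → Tm F → Prop)
    (s t : Tm F) : Prop :=
  ∃ ru ∈ R, ∃ σ : ℕ → Tm F,
    s = applySubst σ ru.lhs ∧ t = applySubst σ ru.rhs ∧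
    ∀ dc ∈ ru.conds, Joinable prev (applySubst σ dc.1) (applySubst σ dc.2)

/-- The level-`i` standard conditional rewrite relation `→_{A_i}`
(`→_{A_0} = ∅`, conditions at level `i+1` checked by `→_{A_i}`-joinability). -/
def Alevel {F : Type} (R : Set (Rule F)) : ℕ → Tm F → Tm F → Prop
  | 0 => fun _ _ => False
  | i + 1 => Ctx (Aroot R (Alevel R i))

/-- The nested parallel conditional rewrite relation `⇒_{A_i}`: smallest
reflexive parallel relation closed under abstraction, parallel application and
the rule `lσ ⇒_{A_i} rτ` whenever `lσ →_{A_i} rσ` and `σ ⇒_{A_i} τ`. -/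
inductive APar {F : Type} (R : Set (Rule F)) (i : ℕ) : Tm F → Tm F → Prop
  | refl (t : Tm F) : APar R i t t
  | app {s s' t t'} : APar R i s s' → APar R i t t' →
      APar R i (Tm.app s t) (Tm.app s' t')
  | lam {s s'} : APar R i s s' → APar R i (Tm.lam s) (Tm.lam s')
  | rule {ru : Rule F} {σ τ : ℕ → Tm F} : ru ∈ R →
      Alevel R i (applySubst σ ru.lhs) (applySubst σ ru.rhs) →
      (∀ n : ℕ, APar R i (σ n) (τ n)) →
      APar R i (applySubst σ ru.lhs) (applySubst τ ru.rhs)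

/-! ### Auxiliary substitution calculus -/

section Aux

variable {F : Type}

/-- Shift a substitution under a binder. -/
def shiftS (σ : ℕ → Tm F) : ℕ → Tm F
  | 0 => Tm.var 0
  | m + 1 => Tm.lift 0 (σ m)

/-- A renaming as a substitution. -/
def renS (ρ : ℕ → ℕ) : ℕ → Tm F := fun n => Tm.var (ρ n)

/-- Shift a renaming under a binder. -/
def upr (ρ : ℕ → ℕ) : ℕ → ℕ
  | 0 => 0
  | m + 1 => ρ m + 1

theorem applySubst_lam' (σ : ℕ → Tm F) (s : Tm F) :
    applySubst σ (Tm.lam s) = Tm.lam (applySubst (shiftS σ) s) := rfl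

theorem shiftS_ren (ρ : ℕ → ℕ) : shiftS (F := F) (renS ρ) = renS (upr ρ) := by
  funext n
  cases n <;> simp [shiftS, renS, upr, Tm.lift]

theorem lift_as_ren (t : Tm F) : ∀ d,
    Tm.lift d t = applySubst (renS (fun n => if n < d then n else n + 1)) t := by
  induction t with
  | const f => intro d; rfl
  | var n => intro d; simp [Tm.lift, applySubst, renS]; split <;> rfl
  | app s t ihs iht => intro d; simp [Tm.lift, applySubst, ihs, iht]
  | lam s ih =>
      intro d
      rw [show Tm.lift d (Tm.lam s) = Tm.lam (Tm.lift (d+1) s) from rfl,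
        applySubst_lam', shiftS_ren, ih]
      refine congrArg Tm.lam (congrArg (fun σ => applySubst σ s)
        (funext fun n => ?_))
      cases n with
      | zero => simp [renS, upr]
      | succ m => simp only [renS, upr]; congr 1; split <;> split <;> omega

theorem ren_ren (t : Tm F) : ∀ ρ ρ',
    applySubst (renS ρ) (applySubst (renS ρ') t)
      = applySubst (renS (fun n => ρ (ρ' n))) t := by
  induction t with
  | const f => intros; rfl
  | var n => intros; rfl
  | app s t ihs iht => intro ρ ρ'; simp [applySubst, ihs, iht]
  | lam s ih =>
      intro ρ ρ'
      rw [applySubst_lam', applySubst_lam', applySubst_lam', shiftS_ren,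
        shiftS_ren, shiftS_ren, ih]
      refine congrArg Tm.lam (congrArg (fun σ => applySubst σ s)
        (funext fun n => ?_))
      cases n <;> rfl

theorem subst_ren (t : Tm F) : ∀ (σ : ℕ → Tm F) ρ,
    applySubst σ (applySubst (renS ρ) t) = applySubst (fun n => σ (ρ n)) t := by
  induction t with
  | const f => intros; rfl
  | var n => intros; rfl
  | app s t ihs iht => intro σ ρ; simp [applySubst, ihs, iht]
  | lam s ih =>
      intro σ ρ
      rw [applySubst_lam', applySubst_lam', applySubst_lam', shiftS_ren, ih]
      refine congrArg Tm.lam (congrArg (fun σ => applySubst σ s)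
        (funext fun n => ?_))
      cases n <;> rfl

theorem ren_lift_s11 (ρ : ℕ → ℕ) (x : Tm F) :
    applySubst (renS (upr ρ)) (Tm.lift 0 x)
      = Tm.lift 0 (applySubst (renS ρ) x) := by
  rw [lift_as_ren, lift_as_ren, ren_ren, ren_ren]
  refine congrArg (fun σ => applySubst σ x) (funext fun n => ?_)
  simp [renS, upr]

theorem ren_subst_s11 (t : Tm F) : ∀ ρ (σ : ℕ → Tm F),
    applySubst (renS ρ) (applySubst σ t)
      = applySubst (fun n => applySubst (renS ρ) (σ n)) t := by
  induction t with
  | const f => intros; rfl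
  | var n => intros; rfl
  | app s t ihs iht => intro ρ σ; simp [applySubst, ihs, iht]
  | lam s ih =>
      intro ρ σ
      rw [applySubst_lam', applySubst_lam', applySubst_lam', shiftS_ren, ih]
      refine congrArg Tm.lam (congrArg (fun σ => applySubst σ s)
        (funext fun n => ?_))
      cases n with
      | zero => rfl
      | succ m => exact ren_lift_s11 ρ (σ m)

theorem subst_lift (θ : ℕ → Tm F) (x : Tm F) :
    applySubst (shiftS θ) (Tm.lift 0 x)
      = Tm.lift 0 (applySubst θ x) := by
  rw [lift_as_ren, subst_ren, lift_as_ren (applySubst θ x), ren_subst_s11]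
  refine congrArg (fun σ => applySubst σ x) (funext fun n => ?_)
  show shiftS θ (n + 1) = _
  rw [show shiftS θ (n + 1) = Tm.lift 0 (θ n) from rfl, lift_as_ren]

theorem subst_subst_s11 (t : Tm F) : ∀ (θ σ : ℕ → Tm F),
    applySubst θ (applySubst σ t)
      = applySubst (fun n => applySubst θ (σ n)) t := by
  induction t with
  | const f => intros; rfl
  | var n => intros; rfl
  | app s t ihs iht => intro θ σ; simp [applySubst, ihs, iht]
  | lam s ih =>
      intro θ σ
      rw [applySubst_lam', applySubst_lam', applySubst_lam', ih]
      refine congrArg Tm.lam (congrArg (fun σ => applySubst σ s)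
        (funext fun n => ?_))
      cases n with
      | zero => rfl
      | succ m => exact subst_lift θ (σ m)

/-- The substituting function for `Tm.subst · k u`. -/
def substS (k : ℕ) (u : Tm F) : ℕ → Tm F := fun n =>
  if n = k then u else if k < n then Tm.var (n - 1) else Tm.var n

theorem subst_eq (t : Tm F) : ∀ k (u : Tm F),
    Tm.subst t k u = applySubst (substS k u) t := by
  induction t with
  | const f => intros; rfl
  | var n => intros; rfl
  | app s t ihs iht => intro k u; simp [Tm.subst, applySubst, ihs, iht]
  | lam s ih =>
      intro k u
      rw [show Tm.subst (Tm.lam s) k u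
          = Tm.lam (Tm.subst s (k+1) (Tm.lift 0 u)) from rfl,
        applySubst_lam', ih]
      refine congrArg Tm.lam (congrArg (fun σ => applySubst σ s)
        (funext fun n => ?_))
      cases n with
      | zero => simp [substS, shiftS]
      | succ m =>
          show substS (k+1) (Tm.lift 0 u) (m+1) = Tm.lift 0 (substS k u m)
          simp only [substS]
          rcases Nat.lt_trichotomy m k with h | h | h
          · rw [if_neg (by omega), if_neg (by omega), if_neg (by omega),
              if_neg (by omega)]
            simp [Tm.lift]
          · subst h
            simp
          · rw [if_neg (by omega), if_pos (by omega), if_neg (by omega),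
              if_pos h]
            simp only [Tm.lift]
            rw [if_neg (by omega)]
            congr 1
            omega

end Aux
section Aux2

variable {F : Type} {R : Set (Rule F)}

/-- `Alevel` is stable under substitution. -/
theorem alevel_subst : ∀ i {s t : Tm F}, Alevel R i s t →
    ∀ θ : ℕ → Tm F, Alevel R i (applySubst θ s) (applySubst θ t) := by
  intro i
  induction i with
  | zero => intro s t h; exact h.elim
  | succ i ih =>
      intro s t h
      induction h with
      | base h =>
          intro θ
          obtain ⟨ru, hru, σ, hs, ht, hc⟩ := h
          refine Ctx.base ⟨ru, hru, fun n => applySubst θ (σ n), ?_, ?_, ?_⟩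
          · rw [hs, subst_subst_s11]
          · rw [ht, subst_subst_s11]
          · intro dc hdc
            obtain ⟨c, h1, h2⟩ := hc dc hdc
            refine ⟨applySubst θ c, ?_, ?_⟩
            · rw [← subst_subst_s11]
              exact Relation.ReflTransGen.lift (applySubst θ) (fun a b hab => ih hab θ) _ _ h1
            · rw [← subst_subst_s11]
              exact Relation.ReflTransGen.lift (applySubst θ) (fun a b hab => ih hab θ) _ _ h2
      | appL t _ ihc => intro θ; exact Ctx.appL _ (ihc θ)
      | appR s _ ihc => intro θ; exact Ctx.appR _ (ihc θ)
      | lam _ ihc =>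
          intro θ
          rw [applySubst_lam', applySubst_lam']
          exact Ctx.lam (ihc (shiftS θ))

/-- `APar` is stable under renamings. -/
theorem aPar_ren {i : ℕ} {s t : Tm F} (h : APar R i s t) :
    ∀ ρ : ℕ → ℕ, APar R i (applySubst (renS ρ) s) (applySubst (renS ρ) t) := by
  induction h with
  | refl t => intro ρ; exact APar.refl _
  | app _ _ ih1 ih2 => intro ρ; exact APar.app (ih1 ρ) (ih2 ρ)
  | lam _ ih =>
      intro ρ
      rw [applySubst_lam', applySubst_lam', shiftS_ren]
      exact APar.lam (ih (upr ρ))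
  | rule hru hA hστ ih =>
      intro ρ
      rw [subst_subst_s11, subst_subst_s11]
      have hA' := alevel_subst _ hA (renS ρ)
      rw [subst_subst_s11, subst_subst_s11] at hA'
      exact APar.rule hru hA' (fun n => ih n ρ)

/-- Reflexive terms under pointwise `APar`-related substitutions. -/
theorem aPar_refl_subst {i : ℕ} (t : Tm F) :
    ∀ {θ θ' : ℕ → Tm F}, (∀ n, APar R i (θ n) (θ' n)) →
    APar R i (applySubst θ t) (applySubst θ' t) := by
  induction t with
  | const f => intro θ θ' h; exact APar.refl _
  | var n => intro θ θ' h; exact h n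
  | app s t ihs iht => intro θ θ' h; exact APar.app (ihs h) (iht h)
  | lam s ih =>
      intro θ θ' h
      rw [applySubst_lam', applySubst_lam']
      refine APar.lam (ih ?_)
      intro n
      cases n with
      | zero => exact APar.refl _
      | succ m =>
          show APar R i (Tm.lift 0 (θ m)) (Tm.lift 0 (θ' m))
          rw [lift_as_ren, lift_as_ren]
          exact aPar_ren (h m) _

/-- Substitutivity of `APar` (parallel form). -/
theorem aPar_subst {i : ℕ} {s s' : Tm F} (h : APar R i s s') :
    ∀ {θ θ' : ℕ → Tm F}, (∀ n, APar R i (θ n) (θ' n)) →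
    APar R i (applySubst θ s) (applySubst θ' s') := by
  induction h with
  | refl t => intro θ θ' hθ; exact aPar_refl_subst t hθ
  | app _ _ ih1 ih2 => intro θ θ' hθ; exact APar.app (ih1 hθ) (ih2 hθ)
  | lam _ ih =>
      intro θ θ' hθ
      rw [applySubst_lam', applySubst_lam']
      refine APar.lam (ih ?_)
      intro n
      cases n with
      | zero => exact APar.refl _
      | succ m =>
          show APar R i (Tm.lift 0 (θ m)) (Tm.lift 0 (θ' m))
          rw [lift_as_ren, lift_as_ren]
          exact aPar_ren (hθ m) _
  | rule hru hA hστ ih =>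
      intro θ θ' hθ
      rw [subst_subst_s11, subst_subst_s11]
      have hA' := alevel_subst _ hA θ
      rw [subst_subst_s11, subst_subst_s11] at hA'
      exact APar.rule hru hA' (fun n => ih n hθ)

/-- Substitutivity of `APar` for single substitutions. -/
theorem aPar_substitutivity {i : ℕ} {s s' a a' : Tm F}
    (hs : APar R i s s') (ha : APar R i a a') :
    APar R i (Tm.subst s 0 a) (Tm.subst s' 0 a') := by
  rw [subst_eq, subst_eq]
  refine aPar_subst hs ?_
  intro n
  cases n with
  | zero => simpa [substS] using ha
  | succ m => simp [substS]; exact APar.refl _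

end Aux2
section Aux3

variable {F : Type} {R : Set (Rule F)}

/-- An instance of an algebraic non-variable term is never an abstraction. -/
theorem inst_ne_lam {l : Tm F} (hl : Alg l) (hv : ∀ n, l ≠ Tm.var n)
    (σ : ℕ → Tm F) (b : Tm F) : applySubst σ l ≠ Tm.lam b := by
  cases hl with
  | const f => intro h; exact absurd h (by simp [applySubst])
  | var n => exact absurd rfl (hv n)
  | app hs ht hnv => intro h; exact absurd h (by simp [applySubst])

/-- An instance of an algebraic non-variable term admits no head step. -/
theorem no_head_inst' : ∀ {l : Tm F}, Alg l → (∀ n, l ≠ Tm.var n) →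
    ∀ (σ : ℕ → Tm F) (w : Tm F), ¬ Head (applySubst σ l) w := by
  intro l hl
  induction hl with
  | const f => intro _ σ w h; rw [show applySubst σ (Tm.const f) = Tm.const f
      from rfl] at h; cases h
  | var n => intro hv; exact absurd rfl (hv n)
  | app hs ht hnv ihs iht =>
      intro _ σ w h
      rw [show applySubst σ (Tm.app _ _)
        = Tm.app (applySubst σ _) (applySubst σ _) from rfl] at h
      generalize hP : applySubst σ _ = P at h
      cases h with
      | beta s0 t0 => exact inst_ne_lam hs hnv σ s0 hP
      | app t hh hnl => rw [← hP] at hh; exact ihs hnv σ _ hh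

theorem no_head_inst {l : Tm F} (hl : Alg l) (hv : ∀ n, l ≠ Tm.var n)
    (σ : ℕ → Tm F) {w : Tm F} : ¬ Head (applySubst σ l) w :=
  no_head_inst' hl hv σ w

theorem aPar_lam_inv
    (hR : ∀ ru ∈ R, Alg ru.lhs ∧ ∀ n : ℕ, ru.lhs ≠ Tm.var n)
    {i : ℕ} {s t : Tm F} (h : APar R i (Tm.lam s) t) :
    ∃ s', t = Tm.lam s' ∧ APar R i s s' := by
  generalize hq : Tm.lam s = q at h
  cases h with
  | refl t => exact ⟨s, hq ▸ rfl, APar.refl s⟩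
  | app h1 h2 => cases hq
  | lam h1 => obtain ⟨rfl⟩ := Tm.lam.injEq .. ▸ hq; exact ⟨_, rfl, h1⟩
  | rule hru hA hστ =>
      exact absurd hq.symm (inst_ne_lam (hR _ hru).1 (hR _ hru).2 _ _)

/-- A parallel reduct of a head-reducible non-abstraction is no abstraction. -/
theorem aPar_not_lam
    (hR : ∀ ru ∈ R, Alg ru.lhs ∧ ∀ n : ℕ, ru.lhs ≠ Tm.var n)
    {i : ℕ} {a a' w : Tm F} (h : APar R i a a') (hw : Head a w)
    (hnl : ∀ b, a ≠ Tm.lam b) : ∀ b, a' ≠ Tm.lam b := by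
  cases h with
  | refl t => exact hnl
  | app h1 h2 => intro b hb; cases hb
  | lam h1 => exact absurd rfl (hnl _)
  | rule hru hA hστ =>
      exact absurd hw (no_head_inst (hR _ hru).1 (hR _ hru).2 _)

end Aux3

/-- `⇒_{A_i}` commutes with one-step head beta-reduction:
if `u ←h s ⇒_{A_i} t` then `u ⇒_{A_i} v ←h t` for some `v`. -/
theorem aPar_commutes_head {F : Type} (R : Set (Rule F))
    (hR : ∀ ru ∈ R, Alg ru.lhs ∧ ∀ n : ℕ, ru.lhs ≠ Tm.var n)
    (i : ℕ) {s t u : Tm F} (hh : Head s u) (hp : APar R i s t) :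
    ∃ v : Tm F, APar R i u v ∧ Head t v := by
  induction hh generalizing t with
  | beta s0 t0 =>
      generalize hq : Tm.app (Tm.lam s0) t0 = q at hp
      cases hp with
      | refl t => exact ⟨_, APar.refl _, hq ▸ Head.beta s0 t0⟩
      | app h1 h2 =>
          obtain ⟨rfl, rfl⟩ := Tm.app.injEq .. ▸ hq
          obtain ⟨s0', rfl, hs0⟩ := aPar_lam_inv hR h1
          exact ⟨_, aPar_substitutivity hs0 h2, Head.beta _ _⟩
      | lam h1 => cases hq
      | rule hru hA hστ =>
          exact absurd (hq ▸ Head.beta s0 t0)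
            (no_head_inst (hR _ hru).1 (hR _ hru).2 _)
  | app t1 hs1 hnl ih =>
      rename_i s1 s1'
      generalize hq : Tm.app s1 t1 = q at hp
      cases hp with
      | refl t => exact ⟨_, APar.refl _, hq ▸ Head.app t1 hs1 hnl⟩
      | app h1 h2 =>
          obtain ⟨rfl, rfl⟩ := Tm.app.injEq .. ▸ hq
          obtain ⟨v1, hv1, hhv1⟩ := ih h1
          exact ⟨_, APar.app hv1 h2,
            Head.app _ hhv1 (aPar_not_lam hR h1 hs1 hnl)⟩
      | lam h1 => cases hq
      | rule hru hA hστ =>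
          exact absurd (hq ▸ Head.app t1 hs1 hnl)
            (no_head_inst (hR _ hru).1 (hR _ hru).2 _)
  | lam hs ih =>
      rename_i s1 s1'
      generalize hq : Tm.lam s1 = q at hp
      cases hp with
      | refl t => exact ⟨_, APar.refl _, hq ▸ Head.lam hs⟩
      | app h1 h2 => cases hq
      | lam h1 =>
          obtain ⟨rfl⟩ := Tm.lam.injEq .. ▸ hq
          obtain ⟨v1, hv1, hhv1⟩ := ih h1
          exact ⟨_, APar.lam hv1, Head.lam hhv1⟩
      | rule hru hA hστ =>
          exact absurd hq.symm (inst_ne_lam (hR _ hru).1 (hR _ hru).2 _ _)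
end CondConf
end
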